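/- For discrete-time: let Q be a finite set with matrices A_q (n×n), B_q (n×m), and let 𝒫 be symmetric positive definite with A_q𝒫A_qᵀ + B_qB_qᵀ − 𝒫 ≤ 0 for all q ∈ Q. Then for every input sequence u : ℕ → ℝᵐ and switching sequence q : ℕ → Q, the trajectory x(t+1) = A_{q(t)}x(t) + B_{q(t)}u(t), x(0) = 0, satisfies x(T)ᵀ𝒫⁻¹x(T) ≤ Σ_{t=0}^{T−1} ‖u(t)‖₂² for every T ∈ ℕ. -/

import Mathlib

open Matrix

/-- `v ⬝ᵥ (M *ᵥ z) = (Mᵀ *ᵥ v) ⬝ᵥ z`. -/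
lemma aux_dp {k l : ℕ} (M : Matrix (Fin k) (Fin l) ℝ) (v : Fin k → ℝ) (z : Fin l → ℝ) :
    v ⬝ᵥ (M *ᵥ z) = (Mᵀ *ᵥ v) ⬝ᵥ z := by
  rw [Matrix.dotProduct_mulVec, Matrix.mulVec_transpose]

/-- For symmetric positive definite `P`: `2 a⬝b ≤ aᵀPa + bᵀP⁻¹b`. -/
lemma aux_amgm {n : ℕ} {P : Matrix (Fin n) (Fin n) ℝ} (hP : P.PosDef)
    (a b : Fin n → ℝ) :
    2 * (a ⬝ᵥ b) ≤ a ⬝ᵥ (P *ᵥ a) + b ⬝ᵥ (P⁻¹ *ᵥ b) := by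
  have hPs : Pᵀ = P := hP.isHermitian
  have hPinvs : (P⁻¹)ᵀ = P⁻¹ := by rw [Matrix.transpose_nonsing_inv, hPs]
  have hdet : IsUnit P.det := isUnit_iff_ne_zero.mpr hP.det_pos.ne'
  set c := a - P⁻¹ *ᵥ b with hc
  have h0 : 0 ≤ c ⬝ᵥ (P *ᵥ c) := by
    have := hP.posSemidef.dotProduct_mulVec_nonneg c
    simpa using this
  have hvm : P⁻¹ *ᵥ b = b ᵥ* P⁻¹ := by
    have := Matrix.mulVec_transpose P⁻¹ b
    rwa [hPinvs] at this
  have hexp : c ⬝ᵥ (P *ᵥ c)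
      = a ⬝ᵥ (P *ᵥ a) - a ⬝ᵥ b - b ⬝ᵥ a + b ⬝ᵥ (P⁻¹ *ᵥ b) := by
    rw [hc]
    rw [Matrix.mulVec_sub, sub_dotProduct, dotProduct_sub,
        dotProduct_sub]
    have h1 : P *ᵥ (P⁻¹ *ᵥ b) = b := by
      rw [Matrix.mulVec_mulVec, Matrix.mul_nonsing_inv _ hdet, Matrix.one_mulVec]
    rw [h1]
    have h2 : (P⁻¹ *ᵥ b) ⬝ᵥ (P *ᵥ a) = b ⬝ᵥ a := by
      rw [hvm, Matrix.dotProduct_mulVec, Matrix.vecMul_vecMul,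
          Matrix.nonsing_inv_mul _ hdet, Matrix.vecMul_one]
    have h3 : (P⁻¹ *ᵥ b) ⬝ᵥ b = b ⬝ᵥ (P⁻¹ *ᵥ b) := dotProduct_comm _ _
    rw [h2, h3]
    ring
  rw [hexp, dotProduct_comm b a] at h0
  linarith

lemma aux_sq {m : ℕ} (a b : Fin m → ℝ) :
    2 * (a ⬝ᵥ b) ≤ a ⬝ᵥ a + b ⬝ᵥ b := by
  have h0 : 0 ≤ (a - b) ⬝ᵥ (a - b) :=
    Finset.sum_nonneg fun i _ => mul_self_nonneg _
  have hx : (a - b) ⬝ᵥ (a - b) = a ⬝ᵥ a - a ⬝ᵥ b - b ⬝ᵥ a + b ⬝ᵥ b := by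
    rw [sub_dotProduct, dotProduct_sub, dotProduct_sub]; ring
  rw [hx, dotProduct_comm b a] at h0
  linarith

theorem stmt9 {n m : ℕ} {Q : Type*} [Fintype Q]
    (A : Q → Matrix (Fin n) (Fin n) ℝ) (B : Q → Matrix (Fin n) (Fin m) ℝ)
    (Pg : Matrix (Fin n) (Fin n) ℝ) (hPg : Pg.PosDef)
    (hgram : ∀ q : Q, ∀ v : Fin n → ℝ,
      v ⬝ᵥ ((A q * Pg * (A q)ᵀ + B q * (B q)ᵀ - Pg) *ᵥ v) ≤ 0)
    (u : ℕ → Fin m → ℝ) (q : ℕ → Q) (x : ℕ → Fin n → ℝ)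
    (hx0 : x 0 = 0)
    (hx : ∀ t : ℕ, x (t + 1) = (A (q t)) *ᵥ (x t) + (B (q t)) *ᵥ (u t))
    (T : ℕ) :
    x T ⬝ᵥ (Pg⁻¹ *ᵥ (x T)) ≤ ∑ t ∈ Finset.range T, ∑ i, (u t i) ^ 2 := by
  have hdet : IsUnit Pg.det := isUnit_iff_ne_zero.mpr hPg.det_pos.ne'
  -- one-step dissipation inequality
  have hstep : ∀ t : ℕ,
      x (t + 1) ⬝ᵥ (Pg⁻¹ *ᵥ x (t + 1)) ≤ x t ⬝ᵥ (Pg⁻¹ *ᵥ x t) + u t ⬝ᵥ u t := by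
    intro t
    set qt := q t
    set y := x (t + 1) with hy
    set w := Pg⁻¹ *ᵥ y with hw
    have hPw : Pg *ᵥ w = y := by
      rw [hw, Matrix.mulVec_mulVec, Matrix.mul_nonsing_inv _ hdet, Matrix.one_mulVec]
    have hVy : y ⬝ᵥ (Pg⁻¹ *ᵥ y) = 2 * (w ⬝ᵥ y) - w ⬝ᵥ (Pg *ᵥ w) := by
      rw [hPw, ← hw, dotProduct_comm y w]; ring
    have hwy : w ⬝ᵥ y = w ⬝ᵥ ((A qt) *ᵥ x t) + w ⬝ᵥ ((B qt) *ᵥ u t) := by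
      rw [hy, hx t, dotProduct_add]
    have h1 : 2 * (w ⬝ᵥ ((A qt) *ᵥ x t))
        ≤ w ⬝ᵥ ((A qt * Pg * (A qt)ᵀ) *ᵥ w) + x t ⬝ᵥ (Pg⁻¹ *ᵥ x t) := by
      have key := aux_amgm hPg ((A qt)ᵀ *ᵥ w) (x t)
      have e1 : ((A qt)ᵀ *ᵥ w) ⬝ᵥ (x t) = w ⬝ᵥ ((A qt) *ᵥ x t) := (aux_dp _ _ _).symm
      have e2 : ((A qt)ᵀ *ᵥ w) ⬝ᵥ (Pg *ᵥ ((A qt)ᵀ *ᵥ w))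
          = w ⬝ᵥ ((A qt * Pg * (A qt)ᵀ) *ᵥ w) := by
        rw [← Matrix.mulVec_mulVec, ← Matrix.mulVec_mulVec, aux_dp (A qt) w]
      rw [e1, e2] at key
      linarith
    have h2 : 2 * (w ⬝ᵥ ((B qt) *ᵥ u t))
        ≤ w ⬝ᵥ ((B qt * (B qt)ᵀ) *ᵥ w) + u t ⬝ᵥ u t := by
      have key := aux_sq ((B qt)ᵀ *ᵥ w) (u t)
      have e1 : ((B qt)ᵀ *ᵥ w) ⬝ᵥ (u t) = w ⬝ᵥ ((B qt) *ᵥ u t) := (aux_dp _ _ _).symm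
      have e2 : ((B qt)ᵀ *ᵥ w) ⬝ᵥ ((B qt)ᵀ *ᵥ w)
          = w ⬝ᵥ ((B qt * (B qt)ᵀ) *ᵥ w) := by
        rw [← Matrix.mulVec_mulVec, aux_dp (B qt) w]
      rw [e1, e2] at key
      linarith
    have hg := hgram qt w
    have hgexp : w ⬝ᵥ ((A qt * Pg * (A qt)ᵀ + B qt * (B qt)ᵀ - Pg) *ᵥ w)
        = w ⬝ᵥ ((A qt * Pg * (A qt)ᵀ) *ᵥ w) + w ⬝ᵥ ((B qt * (B qt)ᵀ) *ᵥ w)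
          - w ⬝ᵥ (Pg *ᵥ w) := by
      rw [Matrix.sub_mulVec, Matrix.add_mulVec, dotProduct_sub,
          dotProduct_add]
    rw [hgexp] at hg
    calc x (t + 1) ⬝ᵥ (Pg⁻¹ *ᵥ x (t + 1)) = 2 * (w ⬝ᵥ y) - w ⬝ᵥ (Pg *ᵥ w) := hVy
      _ ≤ x t ⬝ᵥ (Pg⁻¹ *ᵥ x t) + u t ⬝ᵥ u t := by
          rw [hwy]; linarith
  -- induction on T
  induction T with
  | zero => simp [hx0]
  | succ T ih =>
      have husq : u T ⬝ᵥ u T = ∑ i, (u T i) ^ 2 := by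
        simp [dotProduct, pow_two]
      calc x (T + 1) ⬝ᵥ (Pg⁻¹ *ᵥ x (T + 1))
          ≤ x T ⬝ᵥ (Pg⁻¹ *ᵥ x T) + u T ⬝ᵥ u T := hstep T
        _ ≤ (∑ t ∈ Finset.range T, ∑ i, (u t i) ^ 2) + ∑ i, (u T i) ^ 2 := by
            rw [husq]; linarith
        _ = ∑ t ∈ Finset.range (T + 1), ∑ i, (u t i) ^ 2 := by
            rw [Finset.sum_range_succ]
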